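/- In the finite-horizon robust MDP with real state space under the monotone semicontinuous model, assume additionally a convex model: A is a subset of a vector space, D_n is a convex set, c_N is convex, (x,a) ↦ T_n(x,a,z) is convex for every z, and (x,a,x') ↦ c_n(x,a,x') is convex. Then every value function J_n (n = 0,…,N) is convex on ℝ. -/

import Mathlib

open MeasureTheory ProbabilityTheory Filter Topology
open scoped ENNReal

def robustG (α : ℝ) : ℕ → ℝ
  | 0 => 1
  | m + 1 => 1 + α * robustG α m

theorem robustG_one_le {α : ℝ} (hα : 0 ≤ α) : ∀ m, 1 ≤ robustG α m := by
  intro m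
  induction m with
  | zero => simp [robustG]
  | succ m ih => simp only [robustG]; nlinarith

set_option maxHeartbeats 3200000 in
/-- In the finite-horizon robust MDP with real state space under the
monotone semicontinuous model, assume additionally a convex model: the action space `A` is a
subset of a vector space, `D_n` is convex, `c_N` is convex, `(x,a) ↦ T_n(x,a,z)` is convex for
every `z`, and `(x,a,x') ↦ c_n(x,a,x')` is convex. Then every value function `J_n`
(`n = 0,…,N`, given by the Bellman equation) is convex on `ℝ`. -/
theorem robust_value_functions_convex
    {A Z : Type*}
    [NormedAddCommGroup A] [NormedSpace ℝ A] [MeasurableSpace A] [BorelSpace A]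
    [MeasurableSpace Z]
    (N : ℕ)
    (D : ℕ → Set (ℝ × A)) (hD : ∀ n, MeasurableSet (D n))
    (hDne : ∀ n x, {a | (x, a) ∈ D n}.Nonempty)
    -- compactness and upper semicontinuity of the admissible sets
    (hDcomp : ∀ n x, IsCompact {a | (x, a) ∈ D n})
    (hDusc : ∀ n, ∀ (xs : ℕ → ℝ) (as : ℕ → A) (x : ℝ), Tendsto xs atTop (nhds x) →
      (∀ k, (xs k, as k) ∈ D n) → ∃ a, (x, a) ∈ D n ∧ MapClusterPt a atTop as)
    (T : ℕ → ℝ → A → Z → ℝ)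
    (hT : ∀ n, Measurable fun t : (ℝ × A) × Z => T n t.1.1 t.1.2 t.2)
    (hTlsc : ∀ n z, LowerSemicontinuous fun pa : ℝ × A => T n pa.1 pa.2 z)
    -- monotonicity properties
    (hDdec : ∀ n, ∀ x x' : ℝ, x ≤ x' → {a : A | (x', a) ∈ D n} ⊆ {a : A | (x, a) ∈ D n})
    (hTmono : ∀ n (a : A) (z : Z), Monotone fun x : ℝ => T n x a z)
    (c : ℕ → ℝ → A → ℝ → ℝ)
    (hc : ∀ n, Measurable fun t : (ℝ × A) × ℝ => c n t.1.1 t.1.2 t.2)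
    (hclsc : ∀ n, LowerSemicontinuous fun t : (ℝ × A) × ℝ => c n t.1.1 t.1.2 t.2)
    (hcmono : ∀ n (a : A), Monotone fun xx : ℝ × ℝ => c n xx.1 a xx.2)
    (cN : ℝ → ℝ) (hcN : Measurable cN) (hcNlsc : LowerSemicontinuous cN)
    (hcNmono : Monotone cN)
    (P : ℕ → Measure Z) (hP : ∀ n, IsProbabilityMeasure (P n))
    (p q : ℝ≥0∞) [Fact (1 ≤ p)] [Fact (1 ≤ q)] (hq : 1 < q) (hpq : 1 / p + 1 / q = 1)
    (hPsep : ∀ n, TopologicalSpace.SeparableSpace (Lp ℝ p (P n)))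
    (𝒬 : ℕ → Set (Measure Z)) (h𝒬ne : ∀ n, (𝒬 n).Nonempty)
    (h𝒬prob : ∀ n, ∀ Q ∈ 𝒬 n, IsProbabilityMeasure Q)
    (h𝒬ac : ∀ n, ∀ Q ∈ 𝒬 n, Q ≪ P n)
    (h𝒬Lq : ∀ n, ∀ Q ∈ 𝒬 n, MemLp (fun z => (Q.rnDeriv (P n) z).toReal) q (P n))
    -- (iii) norm-bounded ambiguity sets
    (K : ℝ) (hK : 1 ≤ K)
    (h𝒬bdd : ∀ n, ∀ Q ∈ 𝒬 n,
      eLpNorm (fun z => (Q.rnDeriv (P n) z).toReal) q (P n) ≤ ENNReal.ofReal K)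
    -- (i) lower and upper bounding functions
    (α εl εu : ℝ) (hα0 : 0 ≤ α) (hα1 : α ≠ 1)
    (hεl : 0 ≤ εl) (hεu : 0 ≤ εu) (hε : εl + εu = 1)
    (bl bu : ℝ → ℝ) (hblm : Measurable bl) (hbum : Measurable bu)
    (hbl_le : ∀ x, bl x ≤ -εl) (hbu_ge : ∀ x, εu ≤ bu x)
    (hlb : ∀ n, n < N → ∀ Q ∈ 𝒬 (n + 1), ∀ x a, (x, a) ∈ D n →
      bl x ≤ ∫ z, min (c n x a (T n x a z)) 0 ∂Q)
    (hbl_rec : ∀ n, n < N → ∀ Q ∈ 𝒬 (n + 1), ∀ x a, (x, a) ∈ D n →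
      α * bl x ≤ ∫ z, bl (T n x a z) ∂Q)
    (hub : ∀ n, n < N → ∀ Q ∈ 𝒬 (n + 1), ∀ x a, (x, a) ∈ D n →
      ∫ z, max (c n x a (T n x a z)) 0 ∂Q ≤ bu x)
    (hbu_rec : ∀ n, n < N → ∀ Q ∈ 𝒬 (n + 1), ∀ x a, (x, a) ∈ D n →
      ∫ z, bu (T n x a z) ∂Q ≤ α * bu x)
    (hcN_bd : ∀ x, bl x ≤ cN x ∧ cN x ≤ bu x)
    -- (ii) local L^p domination (with bounding function b = b̄ − b̲)
    (hLp : ∀ n, n < N → ∀ xa : ℝ × A, xa ∈ D n → ∃ ε > (0 : ℝ), ∃ Θ₁ Θ₂ : Z → ℝ,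
      Measurable Θ₁ ∧ Measurable Θ₂ ∧ (∀ z, 0 ≤ Θ₁ z) ∧ (∀ z, 0 ≤ Θ₂ z) ∧
      MemLp Θ₁ p (P (n + 1)) ∧ MemLp Θ₂ p (P (n + 1)) ∧
      ∀ x a, (x, a) ∈ D n → (x, a) ∈ Metric.closedBall xa ε → ∀ z,
        |c n x a (T n x a z)| ≤ Θ₁ z ∧ bu (T n x a z) - bl (T n x a z) ≤ Θ₂ z)
    -- convex model
    (hDconv : ∀ n, Convex ℝ (D n))
    (hTconv : ∀ n (z : Z), ConvexOn ℝ (D n) fun pa : ℝ × A => T n pa.1 pa.2 z)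
    (hcconv : ∀ n, ConvexOn ℝ ((D n) ×ˢ (Set.univ : Set ℝ))
      fun t : (ℝ × A) × ℝ => c n t.1.1 t.1.2 t.2)
    (hcNconv : ConvexOn ℝ Set.univ cN)
    -- the value functions, given by the Bellman equation
    (J : (n : ℕ) → ℝ → ℝ)
    (hJN : ∀ x : ℝ, J N x = cN x)
    (hJrec : ∀ n, n < N → ∀ x : ℝ,
      J n x = sInf ((fun a : A => sSup ((fun Q : Measure Z =>
          ∫ z, (c n x a (T n x a z) + J (n + 1) (T n x a z)) ∂Q) '' 𝒬 (n + 1))) ''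
        {a : A | (x, a) ∈ D n})) :
    ∀ n, n ≤ N → ConvexOn ℝ Set.univ (J n) := by
  classical
  -- Integrability transfer via Hölder: an L^p (w.r.t. P m) function is integrable w.r.t.
  -- any measure in the ambiguity set.
  have keyInt : ∀ m, ∀ Q ∈ 𝒬 m, ∀ Θ : Z → ℝ, MemLp Θ p (P m) → Integrable Θ Q := by
    intro m Q hQ Θ hΘp
    haveI := hP m
    haveI := h𝒬prob m Q hQ
    have hac := h𝒬ac m Q hQ
    have hd : MemLp (fun z => (Q.rnDeriv (P m) z).toReal) q (P m) := h𝒬Lq m Q hQ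
    have h1 : MemLp ((fun z => (Q.rnDeriv (P m) z).toReal) • Θ) 1 (P m) :=
      hΘp.smul hd (hpqr := ⟨by rw [inv_one, add_comm]; simpa [one_div] using hpq⟩)
    have h2 : Integrable (fun z => Θ z * (Q.rnDeriv (P m) z).toReal) (P m) := by
      have := memLp_one_iff_integrable.mp h1
      simpa [Pi.smul_apply, smul_eq_mul, mul_comm, Pi.mul_def] using this
    rw [← Measure.withDensity_rnDeriv_eq Q (P m) hac]
    exact (integrable_withDensity_iff (Measure.measurable_rnDeriv _ _)
      (Measure.rnDeriv_lt_top _ _)).mpr h2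
  have hbl0 : ∀ t, bl t ≤ 0 := fun t => (hbl_le t).trans (neg_nonpos.mpr hεl)
  have hbu0 : ∀ t, 0 ≤ bu t := fun t => le_trans hεu (hbu_ge t)
  -- main downward induction
  have main : ∀ k, k ≤ N → Monotone (J (N - k)) ∧ ConvexOn ℝ Set.univ (J (N - k)) ∧
      ∀ x, robustG α k * bl x ≤ J (N - k) x ∧ J (N - k) x ≤ robustG α k * bu x := by
    intro k
    induction k with
    | zero =>
      intro _
      have hJNfun : J N = cN := funext hJN
      simp only [Nat.sub_zero, hJNfun, robustG, one_mul]
      exact ⟨hcNmono, hcNconv, hcN_bd⟩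
    | succ k ih =>
      intro hk1
      obtain ⟨IHmono, IHconv, IHbd⟩ := ih (by omega)
      set n := N - (k + 1) with hndef
      have hnN : n < N := by omega
      have hn1 : N - k = n + 1 := by omega
      rw [hn1] at IHmono IHconv IHbd
      set κ := robustG α k with hκdef
      have hκ1 : 1 ≤ κ := robustG_one_le hα0 k
      have hκ0 : 0 ≤ κ := le_trans zero_le_one hκ1
      have hGsucc : robustG α (k + 1) = 1 + α * κ := by simp [robustG, hκdef]
      -- abbreviations
      let f : ℝ → A → Z → ℝ := fun x a z =>
        c n x a (T n x a z) + J (n + 1) (T n x a z)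
      let g : ℝ → A → ℝ := fun x a =>
        sSup ((fun Q : Measure Z => ∫ z, f x a z ∂Q) '' 𝒬 (n + 1))
      have hJ' : ∀ x, J n x = sInf (g x '' {a : A | (x, a) ∈ D n}) := hJrec n hnN
      have hJabs : ∀ t, |J (n + 1) t| ≤ κ * (bu t - bl t) := by
        intro t
        obtain ⟨h1, h2⟩ := IHbd t
        rw [abs_le]
        constructor <;> nlinarith [hbl0 t, hbu0 t]
      have measT : ∀ x (a : A), Measurable fun z => T n x a z := by
        intro x a
        have h : Measurable fun z : Z => (((x, a), z) : (ℝ × A) × Z) :=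
          measurable_const.prodMk measurable_id
        exact (hT n).comp h
      have measc : ∀ x (a : A), Measurable fun z => c n x a (T n x a z) := by
        intro x a
        have h : Measurable fun z : Z => ((((x, a), T n x a z)) : (ℝ × A) × ℝ) :=
          measurable_const.prodMk (measT x a)
        exact (hc n).comp h
      have measJ : Measurable (J (n + 1)) := IHmono.measurable
      have measJT : ∀ x (a : A), Measurable fun z => J (n + 1) (T n x a z) := fun x a =>
        measJ.comp (measT x a)
      -- Step A : integrability and per-measure bounds
      have StepA : ∀ x a, (x, a) ∈ D n → ∀ Q ∈ 𝒬 (n + 1),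
          Integrable (fun z => c n x a (T n x a z)) Q ∧
          Integrable (fun z => J (n + 1) (T n x a z)) Q ∧
          (1 + α * κ) * bl x ≤ ∫ z, f x a z ∂Q ∧
          (∫ z, f x a z ∂Q) ≤ (1 + α * κ) * bu x := by
        intro x a hxa Q hQ
        obtain ⟨ε, hε0, Θ₁, Θ₂, hΘ₁m, hΘ₂m, hΘ₁0, hΘ₂0, hΘ₁p, hΘ₂p, hdom⟩ :=
          hLp n hnN (x, a) hxa
        have hd := hdom x a hxa (Metric.mem_closedBall_self (le_of_lt hε0))
        have hΘ₁Q : Integrable Θ₁ Q := keyInt (n + 1) Q hQ Θ₁ hΘ₁p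
        have hΘ₂Q : Integrable Θ₂ Q := keyInt (n + 1) Q hQ Θ₂ hΘ₂p
        have hbuT_le : ∀ z, bu (T n x a z) ≤ Θ₂ z := by
          intro z
          have u1 := (hd z).2
          have u2 := hbl0 (T n x a z)
          linarith
        have hblT_ge : ∀ z, -Θ₂ z ≤ bl (T n x a z) := by
          intro z
          have u1 := (hd z).2
          have u2 := hbu0 (T n x a z)
          linarith
        have hIc : Integrable (fun z => c n x a (T n x a z)) Q :=
          hΘ₁Q.mono (measc x a).aestronglyMeasurable (Eventually.of_forall fun z => by
            rw [Real.norm_eq_abs, Real.norm_eq_abs, abs_of_nonneg (hΘ₁0 z)]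
            exact (hd z).1)
        have hIbu : Integrable (fun z => bu (T n x a z)) Q :=
          hΘ₂Q.mono ((hbum.comp (measT x a)).aestronglyMeasurable)
            (Eventually.of_forall fun z => by
              rw [Real.norm_eq_abs, Real.norm_eq_abs, abs_of_nonneg (hΘ₂0 z),
                abs_of_nonneg (hbu0 _)]
              exact hbuT_le z)
        have hIbl : Integrable (fun z => bl (T n x a z)) Q :=
          hΘ₂Q.mono ((hblm.comp (measT x a)).aestronglyMeasurable)
            (Eventually.of_forall fun z => by
              rw [Real.norm_eq_abs, Real.norm_eq_abs, abs_of_nonneg (hΘ₂0 z),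
                abs_of_nonpos (hbl0 _)]
              have := hblT_ge z; linarith)
        have hIJ : Integrable (fun z => J (n + 1) (T n x a z)) Q :=
          (hΘ₂Q.const_mul κ).mono (measJT x a).aestronglyMeasurable
            (Eventually.of_forall fun z => by
              rw [Real.norm_eq_abs, Real.norm_eq_abs]
              refine (hJabs _).trans ?_
              have h3 := hΘ₂0 z
              rw [abs_of_nonneg (by nlinarith : (0:ℝ) ≤ κ * Θ₂ z)]
              exact mul_le_mul_of_nonneg_left (hd z).2 hκ0)
        have hImax : Integrable (fun z => max (c n x a (T n x a z)) 0) Q :=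
          hΘ₁Q.mono ((measc x a).max measurable_const).aestronglyMeasurable
            (Eventually.of_forall fun z => by
              rw [Real.norm_eq_abs, Real.norm_eq_abs, abs_of_nonneg (hΘ₁0 z)]
              have u1 := (hd z).1
              rw [abs_of_nonneg (le_max_right _ _)]
              exact max_le (le_trans (le_abs_self _) u1) (hΘ₁0 z))
        have hImin : Integrable (fun z => min (c n x a (T n x a z)) 0) Q :=
          hΘ₁Q.mono ((measc x a).min measurable_const).aestronglyMeasurable
            (Eventually.of_forall fun z => by
              rw [Real.norm_eq_abs, Real.norm_eq_abs, abs_of_nonneg (hΘ₁0 z),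
                abs_of_nonpos (min_le_right _ _)]
              have u1 := (hd z).1
              have u2 := neg_abs_le (c n x a (T n x a z))
              have u3 := hΘ₁0 z
              have hmin : min (c n x a (T n x a z)) 0 ≥ -(Θ₁ z) := by
                refine le_min ?_ ?_ <;> linarith
              linarith)
        have hsplit : (∫ z, f x a z ∂Q) =
            (∫ z, c n x a (T n x a z) ∂Q) + ∫ z, J (n + 1) (T n x a z) ∂Q :=
          integral_add hIc hIJ
        have hcub : (∫ z, c n x a (T n x a z) ∂Q) ≤ bu x := by
          refine le_trans (integral_mono hIc hImax fun z => le_max_left _ _) ?_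
          exact hub n hnN Q hQ x a hxa
        have hclb : bl x ≤ ∫ z, c n x a (T n x a z) ∂Q := by
          refine le_trans (hlb n hnN Q hQ x a hxa) ?_
          exact integral_mono hImin hIc fun z => min_le_left _ _
        have hJub : (∫ z, J (n + 1) (T n x a z) ∂Q) ≤ κ * (α * bu x) := by
          have h1 : (∫ z, J (n + 1) (T n x a z) ∂Q) ≤ ∫ z, κ * bu (T n x a z) ∂Q :=
            integral_mono hIJ (hIbu.const_mul κ) fun z => by
              have := (IHbd (T n x a z)).2
              have := hbu0 (T n x a z)
              nlinarith
          rw [integral_const_mul] at h1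
          exact h1.trans (mul_le_mul_of_nonneg_left (hbu_rec n hnN Q hQ x a hxa) hκ0)
        have hJlb : κ * (α * bl x) ≤ ∫ z, J (n + 1) (T n x a z) ∂Q := by
          have h1 : (∫ z, κ * bl (T n x a z) ∂Q) ≤ ∫ z, J (n + 1) (T n x a z) ∂Q :=
            integral_mono (hIbl.const_mul κ) hIJ fun z => by
              have := (IHbd (T n x a z)).1
              nlinarith
          rw [integral_const_mul] at h1
          exact le_trans (mul_le_mul_of_nonneg_left (hbl_rec n hnN Q hQ x a hxa) hκ0) h1
        refine ⟨hIc, hIJ, ?_, ?_⟩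
        · rw [hsplit]; nlinarith
        · rw [hsplit]; nlinarith
      -- bounds on g
      have hgne : ∀ x (a : A),
          ((fun Q : Measure Z => ∫ z, f x a z ∂Q) '' 𝒬 (n + 1)).Nonempty :=
        fun x a => (h𝒬ne (n + 1)).image _
      have hgbddA : ∀ x a, (x, a) ∈ D n →
          BddAbove ((fun Q : Measure Z => ∫ z, f x a z ∂Q) '' 𝒬 (n + 1)) := by
        intro x a hxa
        refine ⟨(1 + α * κ) * bu x, ?_⟩
        rintro b ⟨Q, hQ, rfl⟩
        exact (StepA x a hxa Q hQ).2.2.2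
      have hg_le : ∀ x a, (x, a) ∈ D n → g x a ≤ (1 + α * κ) * bu x := by
        intro x a hxa
        refine csSup_le (hgne x a) ?_
        rintro b ⟨Q, hQ, rfl⟩
        exact (StepA x a hxa Q hQ).2.2.2
      have hg_ge : ∀ x a, (x, a) ∈ D n → (1 + α * κ) * bl x ≤ g x a := by
        intro x a hxa
        obtain ⟨Q0, hQ0⟩ := h𝒬ne (n + 1)
        exact le_trans (StepA x a hxa Q0 hQ0).2.2.1
          (le_csSup (hgbddA x a hxa) ⟨Q0, hQ0, rfl⟩)
      have hJne : ∀ x, (g x '' {a : A | (x, a) ∈ D n}).Nonempty :=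
        fun x => (hDne n x).image _
      have hJbddB : ∀ x, BddBelow (g x '' {a : A | (x, a) ∈ D n}) := by
        intro x
        refine ⟨(1 + α * κ) * bl x, ?_⟩
        rintro b ⟨a, ha, rfl⟩
        exact hg_ge x a ha
      have hJn_le_g : ∀ x a, (x, a) ∈ D n → J n x ≤ g x a := by
        intro x a hxa
        rw [hJ' x]
        exact csInf_le (hJbddB x) ⟨a, hxa, rfl⟩
      have hJn_ge : ∀ x, (1 + α * κ) * bl x ≤ J n x := by
        intro x
        rw [hJ' x]
        refine le_csInf (hJne x) ?_
        rintro b ⟨a, ha, rfl⟩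
        exact hg_ge x a ha
      have hJn_le : ∀ x, J n x ≤ (1 + α * κ) * bu x := by
        intro x
        obtain ⟨a0, ha0⟩ := hDne n x
        exact (hJn_le_g x a0 ha0).trans (hg_le x a0 ha0)
      -- monotonicity of J n
      have hFmono : ∀ x x', x ≤ x' → ∀ a : A, (x', a) ∈ D n → ∀ z,
          f x a z ≤ f x' a z := by
        intro x x' hxx a _ z
        have hT' : T n x a z ≤ T n x' a z := hTmono n a z hxx
        have h1 : c n x a (T n x a z) ≤ c n x' a (T n x' a z) :=
          hcmono n a (Prod.mk_le_mk.mpr ⟨hxx, hT'⟩)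
        have h2 : J (n + 1) (T n x a z) ≤ J (n + 1) (T n x' a z) := IHmono hT'
        exact add_le_add h1 h2
      have hmono : Monotone (J n) := by
        intro x x' hxx
        rw [hJ' x']
        refine le_csInf (hJne x') ?_
        rintro b ⟨a, ha, rfl⟩
        have hax : (x, a) ∈ D n := hDdec n x x' hxx ha
        refine (hJn_le_g x a hax).trans ?_
        refine csSup_le (hgne x a) ?_
        rintro b ⟨Q, hQ, rfl⟩
        have hA := StepA x a hax Q hQ
        have hA' := StepA x' a ha Q hQ
        have hint : (∫ z, f x a z ∂Q) ≤ ∫ z, f x' a z ∂Q :=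
          integral_mono (hA.1.add hA.2.1) (hA'.1.add hA'.2.1)
            (fun z => hFmono x x' hxx a ha z)
        exact hint.trans (le_csSup (hgbddA x' a ha) ⟨Q, hQ, rfl⟩)
      -- convexity of J n
      have hconv : ConvexOn ℝ Set.univ (J n) := by
        refine ⟨convex_univ, ?_⟩
        intro x _ y _ t s ht hs hts
        simp only [smul_eq_mul]
        refine le_of_forall_pos_le_add ?_
        intro ε hε'
        obtain ⟨b1, hb1mem, hb1⟩ := Real.lt_sInf_add_pos (hJne x) hε'
        obtain ⟨b2, hb2mem, hb2⟩ := Real.lt_sInf_add_pos (hJne y) hε'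
        rw [← hJ' x] at hb1
        rw [← hJ' y] at hb2
        obtain ⟨a1, ha1, rfl⟩ := hb1mem
        obtain ⟨a2, ha2, rfl⟩ := hb2mem
        have ham : (t * x + s * y, t • a1 + s • a2) ∈ D n := by
          have := hDconv n ha1 ha2 ht hs hts
          simpa [Prod.smul_mk, Prod.mk_add_mk, smul_eq_mul] using this
        refine le_trans (hJn_le_g _ _ ham) ?_
        have hpt : ∀ (Q : Measure Z), Q ∈ 𝒬 (n + 1) → ∀ z,
            f (t * x + s * y) (t • a1 + s • a2) z ≤ t * f x a1 z + s * f y a2 z := by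
          intro Q hQ z
          have huv : T n (t * x + s * y) (t • a1 + s • a2) z ≤
              t * T n x a1 z + s * T n y a2 z := by
            have := (hTconv n z).2 ha1 ha2 ht hs hts
            simpa [Prod.smul_mk, Prod.mk_add_mk, smul_eq_mul] using this
          have hcv : c n (t * x + s * y) (t • a1 + s • a2)
              (t * T n x a1 z + s * T n y a2 z) ≤
              t * c n x a1 (T n x a1 z) + s * c n y a2 (T n y a2 z) := by
            have := (hcconv n).2
              (show (((x, a1), T n x a1 z) : (ℝ × A) × ℝ) ∈ D n ×ˢ Set.univ from
                ⟨ha1, Set.mem_univ _⟩)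
              (show (((y, a2), T n y a2 z) : (ℝ × A) × ℝ) ∈ D n ×ˢ Set.univ from
                ⟨ha2, Set.mem_univ _⟩) ht hs hts
            simpa [Prod.smul_mk, Prod.mk_add_mk, smul_eq_mul] using this
          have hcm : c n (t * x + s * y) (t • a1 + s • a2)
              (T n (t * x + s * y) (t • a1 + s • a2) z) ≤
              c n (t * x + s * y) (t • a1 + s • a2)
                (t * T n x a1 z + s * T n y a2 z) :=
            hcmono n _ (Prod.mk_le_mk.mpr ⟨le_refl _, huv⟩)
          have hJm : J (n + 1) (T n (t * x + s * y) (t • a1 + s • a2) z) ≤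
              J (n + 1) (t * T n x a1 z + s * T n y a2 z) := IHmono huv
          have hJc : J (n + 1) (t * T n x a1 z + s * T n y a2 z) ≤
              t * J (n + 1) (T n x a1 z) + s * J (n + 1) (T n y a2 z) := by
            have := IHconv.2 (Set.mem_univ (T n x a1 z)) (Set.mem_univ (T n y a2 z))
              ht hs hts
            simpa [smul_eq_mul] using this
          show c n (t * x + s * y) (t • a1 + s • a2)
              (T n (t * x + s * y) (t • a1 + s • a2) z) +
              J (n + 1) (T n (t * x + s * y) (t • a1 + s • a2) z) ≤
              t * (c n x a1 (T n x a1 z) + J (n + 1) (T n x a1 z)) +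
              s * (c n y a2 (T n y a2 z) + J (n + 1) (T n y a2 z))
          nlinarith [hcm, hcv, hJm, hJc]
        have hga : g (t * x + s * y) (t • a1 + s • a2) ≤ t * g x a1 + s * g y a2 := by
          refine csSup_le (hgne _ _) ?_
          rintro b ⟨Q, hQ, rfl⟩
          have hAm := StepA _ _ ham Q hQ
          have hA1 := StepA x a1 ha1 Q hQ
          have hA2 := StepA y a2 ha2 Q hQ
          have hI1 : Integrable (fun z => f x a1 z) Q := hA1.1.add hA1.2.1
          have hI2 : Integrable (fun z => f y a2 z) Q := hA2.1.add hA2.2.1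
          have hIm : Integrable (fun z => f (t * x + s * y) (t • a1 + s • a2) z) Q :=
            hAm.1.add hAm.2.1
          have step1 : (∫ z, f (t * x + s * y) (t • a1 + s • a2) z ∂Q) ≤
              ∫ z, (t * f x a1 z + s * f y a2 z) ∂Q :=
            integral_mono hIm ((hI1.const_mul t).add (hI2.const_mul s)) (hpt Q hQ)
          have step2 : (∫ z, (t * f x a1 z + s * f y a2 z) ∂Q) =
              t * (∫ z, f x a1 z ∂Q) + s * ∫ z, f y a2 z ∂Q := by
            rw [integral_add (hI1.const_mul t) (hI2.const_mul s),
              integral_const_mul, integral_const_mul]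
          have step3 : (∫ z, f x a1 z ∂Q) ≤ g x a1 :=
            le_csSup (hgbddA x a1 ha1) ⟨Q, hQ, rfl⟩
          have step4 : (∫ z, f y a2 z ∂Q) ≤ g y a2 :=
            le_csSup (hgbddA y a2 ha2) ⟨Q, hQ, rfl⟩
          calc (∫ z, f (t * x + s * y) (t • a1 + s • a2) z ∂Q)
              ≤ t * (∫ z, f x a1 z ∂Q) + s * ∫ z, f y a2 z ∂Q := by
                rw [← step2]; exact step1
            _ ≤ t * g x a1 + s * g y a2 :=
                add_le_add (mul_le_mul_of_nonneg_left step3 ht)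
                  (mul_le_mul_of_nonneg_left step4 hs)
        refine hga.trans ?_
        have e1 : t * g x a1 ≤ t * (J n x + ε) :=
          mul_le_mul_of_nonneg_left hb1.le ht
        have e2 : s * g y a2 ≤ s * (J n y + ε) :=
          mul_le_mul_of_nonneg_left hb2.le hs
        nlinarith [e1, e2]
      refine ⟨hmono, hconv, fun x => ?_⟩
      rw [hGsucc]
      exact ⟨hJn_ge x, hJn_le x⟩
  intro n hn
  have h := (main (N - n) (by omega)).2.1
  rwa [show N - (N - n) = n by omega] at h
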